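/- Let f be an absolutely continuous probability density on (0,∞) with finite Fisher information for scale I_s(f) = ∫ (1 + x f'(x)/f(x))² f(x) dx. Let G be any distribution function on (0,∞) and define h(x) = ∫₀^∞ (1/u) f(x/u) dG(u). Then I_s(h) ≤ I_s(f). -/

import Mathlib

open MeasureTheory Set

open scoped ENNReal

/-- scaling change of variables for lintegral -/
lemma lint_scale (g : ℝ → ℝ≥0∞) (hg : Measurable g) {u : ℝ} (hu : u ≠ 0) :
    ∫⁻ x, g (x / u) = ENNReal.ofReal |u| * ∫⁻ t, g t := by
  have h1 : (fun x : ℝ => g (x / u)) = fun x => g (u⁻¹ * x) := by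
    funext x; rw [div_eq_inv_mul]
  rw [h1]
  have h2 : ∫⁻ x, g (u⁻¹ * x) = ∫⁻ y, g y ∂(Measure.map (u⁻¹ * ·) volume) :=
    (lintegral_map hg (measurable_const_mul _)).symm
  rw [h2, Real.map_volume_mul_left (inv_ne_zero hu), lintegral_smul_measure, inv_inv, smul_eq_mul]

/-- Cauchy-Schwarz for lintegrals of nonneg real functions -/
lemma cs_lemma {α : Type*} [MeasurableSpace α] (μ : Measure α) (g φ : α → ℝ)
    (hg : Measurable g) (hφ : Measurable φ) (hφ0 : 0 ≤ᵐ[μ] φ) :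
    (∫⁻ u, ENNReal.ofReal (|g u| * φ u) ∂μ) ^ 2
      ≤ (∫⁻ u, ENNReal.ofReal (g u ^ 2 * φ u) ∂μ) * (∫⁻ u, ENNReal.ofReal (φ u) ∂μ) := by
  set A : α → ℝ≥0∞ := fun u => ENNReal.ofReal (g u ^ 2 * φ u) with hA
  set B : α → ℝ≥0∞ := fun u => ENNReal.ofReal (φ u) with hB
  have hAm : Measurable A := ENNReal.measurable_ofReal.comp ((hg.pow measurable_const).mul hφ)
  have hBm : Measurable B := ENNReal.measurable_ofReal.comp hφ
  have conj : Real.HolderConjugate 2 2 := Real.holderConjugate_iff.mpr ⟨one_lt_two, by norm_num⟩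
  have hAm2 : Measurable (fun u => A u ^ (1/2 : ℝ)) := hAm.pow measurable_const
  have hBm2 : Measurable (fun u => B u ^ (1/2 : ℝ)) := hBm.pow measurable_const
  have key := ENNReal.lintegral_mul_le_Lp_mul_Lq μ conj hAm2.aemeasurable hBm2.aemeasurable
  simp only [Pi.mul_apply] at key
  have hhalf : ∀ z : ℝ≥0∞, (z ^ (1/2 : ℝ)) ^ (2 : ℝ) = z := by
    intro z
    rw [← ENNReal.rpow_mul]
    norm_num
  have e1 : (fun u => ENNReal.ofReal (|g u| * φ u)) =ᵐ[μ]
      (fun u => A u ^ (1/2:ℝ) * B u ^ (1/2:ℝ)) := by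
    filter_upwards [hφ0] with u hu
    have ht : (0:ℝ) ≤ |g u| * φ u := mul_nonneg (abs_nonneg _) hu
    have h2 : A u * B u = ENNReal.ofReal (|g u| * φ u) ^ (2:ℕ) := by
      rw [hA, hB]
      rw [← ENNReal.ofReal_pow ht, ← ENNReal.ofReal_mul (mul_nonneg (sq_nonneg _) hu)]
      congr 1
      rw [mul_pow, sq_abs]; ring
    have h3 : A u ^ (1/2:ℝ) * B u ^ (1/2:ℝ) = (A u * B u) ^ (1/2:ℝ) :=
      (ENNReal.mul_rpow_of_nonneg _ _ (by norm_num)).symm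
    rw [h3, h2, ← ENNReal.rpow_natCast (ENNReal.ofReal (|g u| * φ u)) 2, ← ENNReal.rpow_mul]
    norm_num
  rw [lintegral_congr_ae e1]
  have key2 : (∫⁻ u, A u ^ (1/2:ℝ) * B u ^ (1/2:ℝ) ∂μ) ^ (2:ℕ)
      ≤ ((∫⁻ a, (A a ^ (1/2:ℝ)) ^ (2:ℝ) ∂μ) ^ (1/(2:ℝ))
          * (∫⁻ a, (B a ^ (1/2:ℝ)) ^ (2:ℝ) ∂μ) ^ (1/(2:ℝ))) ^ (2:ℕ) :=
    pow_le_pow_left₀ (zero_le) key 2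
  refine key2.trans (le_of_eq ?_)
  simp_rw [hhalf]
  rw [mul_pow, ← ENNReal.rpow_natCast ((lintegral μ A) ^ (1/(2:ℝ))) 2,
    ← ENNReal.rpow_natCast ((lintegral μ B) ^ (1/(2:ℝ))) 2,
    ← ENNReal.rpow_mul, ← ENNReal.rpow_mul]
  norm_num

/-- Tonelli + scaling: mixing preserves total mass -/
lemma tone_lemma (G : Measure ℝ) [IsProbabilityMeasure G] (hG : ∀ᵐ u ∂G, 0 < u)
    (g : ℝ → ℝ≥0∞) (hg : Measurable g) :
    ∫⁻ x, (∫⁻ u, ENNReal.ofReal (1/u) * g (x/u) ∂G) ∂volume = ∫⁻ t, g t ∂volume := by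
  have hm : Measurable (fun p : ℝ × ℝ => ENNReal.ofReal (1/p.2) * g (p.1/p.2)) :=
    ((measurable_const.div measurable_snd).ennreal_ofReal).mul
      (hg.comp (measurable_fst.div measurable_snd))
  rw [lintegral_lintegral_swap hm.aemeasurable]
  have inner : ∀ᵐ u ∂G, (∫⁻ x, ENNReal.ofReal (1/u) * g (x/u) ∂volume) = ∫⁻ t, g t ∂volume := by
    filter_upwards [hG] with u hu
    rw [lintegral_const_mul' _ _ ENNReal.ofReal_ne_top, lint_scale g hg hu.ne',
      ← mul_assoc, ← ENNReal.ofReal_mul (by positivity), abs_of_pos hu, one_div,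
      inv_mul_cancel₀ hu.ne', ENNReal.ofReal_one, one_mul]
  rw [lintegral_congr_ae inner, lintegral_const, measure_univ, mul_one]

/-- Multiplication by an independent positive factor decreases Fisher information
for scale: if `h(x) = ∫ (1/u) f(x/u) dG(u)` then `I_s(h) ≤ I_s(f)`. -/
theorem stmt5 (f f' : ℝ → ℝ) (hf0 : ∀ x, 0 ≤ f x) (hsupp : ∀ x ≤ 0, f x = 0)
    (hf1 : ∫ x in Ioi (0:ℝ), f x = 1)
    (hderiv : ∀ᵐ x, HasDerivAt f (f' x) x)
    (hfin : IntegrableOn (fun x => (1 + x * f' x / f x) ^ 2 * f x) (Ioi 0))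
    (G : Measure ℝ) [IsProbabilityMeasure G] (hG : G (Ioi 0)ᶜ = 0)
    (h h' : ℝ → ℝ)
    (hh : ∀ x, h x = ∫ u, (1 / u) * f (x / u) ∂G)
    (hh' : ∀ x, h' x = ∫ u, (1 / u ^ 2) * f' (x / u) ∂G) :
    ∫ x in Ioi (0:ℝ), (1 + x * h' x / h x) ^ 2 * h x
      ≤ ∫ x in Ioi (0:ℝ), (1 + x * f' x / f x) ^ 2 * f x := by
  -- G-a.e. positivity
  have hGpos : ∀ᵐ u ∂G, 0 < u := by
    have he : (Ioi (0:ℝ))ᶜ = {u | ¬ 0 < u} := by ext u; simp [mem_Ioi]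
    rw [ae_iff, ← he]; exact hG
  -- integrability of f on Ioi 0
  have hint : IntegrableOn f (Ioi 0) := by
    by_contra hc; rw [integral_undef hc] at hf1; norm_num at hf1
  -- measurable modification of f
  have hfae0 : ∀ᵐ x ∂(volume.restrict (Ioi (0:ℝ))ᶜ), f x = 0 := by
    rw [compl_Ioi]
    exact (ae_restrict_iff' measurableSet_Iic).2 (Filter.Eventually.of_forall
      fun x hx => hsupp x hx)
  have hsm : AEStronglyMeasurable f volume := by
    have h1 : AEStronglyMeasurable f (volume.restrict (Ioi 0)) := hint.aestronglyMeasurable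
    have h2 : AEStronglyMeasurable f (volume.restrict (Ioi (0:ℝ))ᶜ) :=
      (aestronglyMeasurable_const (b := (0:ℝ))).congr
        (hfae0.mono fun x hx => hx.symm)
    have h3 : AEStronglyMeasurable f
        (volume.restrict (Ioi 0) + volume.restrict (Ioi (0:ℝ))ᶜ) :=
      aestronglyMeasurable_add_measure_iff.2 ⟨h1, h2⟩
    rwa [Measure.restrict_add_restrict_compl measurableSet_Ioi] at h3
  have hfm : AEMeasurable f volume := hsm.aemeasurable
  set F : ℝ → ℝ := hfm.mk f with hFdef
  have hF : Measurable F := hfm.measurable_mk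
  have hfF : f =ᵐ[volume] F := hfm.ae_eq_mk
  set F' : ℝ → ℝ := deriv f with hF'def
  have hF' : Measurable F' := measurable_deriv f
  have hf'F' : f' =ᵐ[volume] F' := by
    filter_upwards [hderiv] with x hx; exact hx.deriv.symm
  -- combined a.e. properties, with a measurable null superset of the bad set
  have hae : ∀ᵐ t, f t = F t ∧ f' t = F' t ∧ (F t = 0 → F' t = 0) ∧ 0 ≤ F t := by
    filter_upwards [hfF, hf'F', hderiv] with t h1 h2 h3
    refine ⟨h1, h2, fun hFt => ?_, h1 ▸ hf0 t⟩
    have hft : f t = 0 := h1.trans hFt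
    have hmin : IsLocalMin f t := Filter.Eventually.of_forall fun y => by
      rw [hft]; exact hf0 y
    rw [← h2]; exact hmin.hasDerivAt_eq_zero h3
  obtain ⟨N, hNsub, hNmeas, hNnull⟩ :=
    exists_measurable_superset_of_null (ae_iff.1 hae)
  have hNprop : ∀ t, t ∉ N →
      f t = F t ∧ f' t = F' t ∧ (F t = 0 → F' t = 0) ∧ 0 ≤ F t := by
    intro t ht
    by_contra hcon
    exact ht (hNsub hcon)
  -- the measurable Fisher-information integrand
  set ρ : ℝ → ℝ := fun t => (1 + t * F' t / F t) ^ 2 * F t with hρdef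
  have hρm : Measurable ρ :=
    ((measurable_const.add ((measurable_id.mul hF').div hF)).pow measurable_const).mul hF
  set Rtop : ℝ≥0∞ := ∫⁻ t, ENNReal.ofReal (ρ t) ∂volume with hRdef
  have hcompl : ∫⁻ t in (Ioi (0:ℝ))ᶜ, ENNReal.ofReal (ρ t) ∂volume = 0 := by
    have : ∀ᵐ t ∂(volume.restrict (Ioi (0:ℝ))ᶜ), ENNReal.ofReal (ρ t) = 0 := by
      filter_upwards [hfae0, ae_restrict_of_ae hfF] with t h1 h2
      simp only [hρdef]
      rw [← h2, h1]; simp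
    rw [lintegral_congr_ae this, lintegral_zero]
  have hIoiR : ∫⁻ t in Ioi (0:ℝ), ENNReal.ofReal ((1 + t * f' t / f t) ^ 2 * f t) ∂volume
      = Rtop := by
    rw [hRdef, ← lintegral_add_compl (fun t => ENNReal.ofReal (ρ t)) measurableSet_Ioi,
      hcompl, add_zero]
    refine lintegral_congr_ae ?_
    filter_upwards [ae_restrict_of_ae hfF, ae_restrict_of_ae hf'F'] with t h1 h2
    rw [h1, h2]
  have hRne : Rtop ≠ ⊤ := by
    rw [← hIoiR]
    exact (lintegral_ofReal_ne_top_iff_integrable hfin.aestronglyMeasurable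
      (Filter.Eventually.of_forall fun x => mul_nonneg (sq_nonneg _) (hf0 x))).2 hfin
  have hRHS : ∫ x in Ioi (0:ℝ), (1 + x * f' x / f x) ^ 2 * f x = Rtop.toReal := by
    rw [integral_eq_lintegral_of_nonneg_ae
      (Filter.Eventually.of_forall fun x => mul_nonneg (sq_nonneg _) (hf0 x))
      hfin.aestronglyMeasurable, hIoiR]
  -- mixed kernels
  set K : ℝ → ℝ≥0∞ :=
    fun x => ∫⁻ u, ENNReal.ofReal (1/u) * ENNReal.ofReal (ρ (x/u)) ∂G with hKdef
  set L : ℝ → ℝ≥0∞ :=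
    fun x => ∫⁻ u, ENNReal.ofReal (1/u) * ENNReal.ofReal (F (x/u)) ∂G with hLdef
  have hKtone : ∫⁻ x, K x ∂volume = Rtop :=
    tone_lemma G hGpos _ (ENNReal.measurable_ofReal.comp hρm)
  have hLtone : ∫⁻ x, L x ∂volume = ∫⁻ t, ENNReal.ofReal (F t) ∂volume :=
    tone_lemma G hGpos _ (ENNReal.measurable_ofReal.comp hF)
  have hLfin : ∫⁻ t, ENNReal.ofReal (F t) ∂volume ≠ ⊤ := by
    rw [← lintegral_add_compl (fun t => ENNReal.ofReal (F t)) measurableSet_Ioi]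
    have hc2 : ∫⁻ t in (Ioi (0:ℝ))ᶜ, ENNReal.ofReal (F t) ∂volume = 0 := by
      have : ∀ᵐ t ∂(volume.restrict (Ioi (0:ℝ))ᶜ), ENNReal.ofReal (F t) = 0 := by
        filter_upwards [hfae0, ae_restrict_of_ae hfF] with t h1 h2
        rw [← h2, h1]; simp
      rw [lintegral_congr_ae this, lintegral_zero]
    have hi2 : ∫⁻ t in Ioi (0:ℝ), ENNReal.ofReal (F t) ∂volume ≠ ⊤ := by
      have he : ∫⁻ t in Ioi (0:ℝ), ENNReal.ofReal (F t) ∂volume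
          = ∫⁻ t in Ioi (0:ℝ), ENNReal.ofReal (f t) ∂volume := by
        refine lintegral_congr_ae ?_
        filter_upwards [ae_restrict_of_ae hfF] with t h1
        rw [h1]
      rw [he]
      exact (lintegral_ofReal_ne_top_iff_integrable hint.aestronglyMeasurable
        (Filter.Eventually.of_forall fun x => hf0 x)).2 hint
    rw [hc2, add_zero]
    exact hi2
  have hKmu : Measurable (Function.uncurry fun x u =>
      ENNReal.ofReal (1/u) * ENNReal.ofReal (ρ (x/u))) :=
    ((measurable_const.div measurable_snd).ennreal_ofReal).mul
      ((ENNReal.measurable_ofReal.comp hρm).comp (measurable_fst.div measurable_snd))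
  have hLmu : Measurable (Function.uncurry fun x u =>
      ENNReal.ofReal (1/u) * ENNReal.ofReal (F (x/u))) :=
    ((measurable_const.div measurable_snd).ennreal_ofReal).mul
      ((ENNReal.measurable_ofReal.comp hF).comp (measurable_fst.div measurable_snd))
  have hKm : Measurable K := Measurable.lintegral_prod_right hKmu
  have hLm : Measurable L := Measurable.lintegral_prod_right hLmu
  have hKae : ∀ᵐ x, K x < ⊤ := ae_lt_top hKm (by rw [hKtone]; exact hRne)
  have hLae : ∀ᵐ x, L x < ⊤ := ae_lt_top hLm (by rw [hLtone]; exact hLfin)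
  -- pushing the bad null set
  have hpush : ∀ᵐ x : ℝ, ∀ᵐ u ∂G, x/u ∉ N := by
    have hindm : Measurable (N.indicator (1 : ℝ → ℝ≥0∞)) :=
      measurable_const.indicator hNmeas
    have hzero : ∫⁻ x, (∫⁻ u, ENNReal.ofReal (1/u)
        * (N.indicator (1 : ℝ → ℝ≥0∞) (x/u)) ∂G) ∂volume = 0 := by
      rw [tone_lemma G hGpos _ hindm, lintegral_indicator_one hNmeas, hNnull]
    have hmm : Measurable (Function.uncurry fun x u =>
        ENNReal.ofReal (1/u) * (N.indicator (1 : ℝ → ℝ≥0∞) (x/u))) :=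
      ((measurable_const.div measurable_snd).ennreal_ofReal).mul
        (hindm.comp (measurable_fst.div measurable_snd))
    have h1 := (lintegral_eq_zero_iff (Measurable.lintegral_prod_right hmm)).1 hzero
    filter_upwards [h1] with x hx
    have h2 := (lintegral_eq_zero_iff
      (((measurable_const.div measurable_id).ennreal_ofReal).mul
        (hindm.comp (measurable_const.div measurable_id)))).1 hx
    filter_upwards [h2, hGpos] with u hu hupos
    intro hmem
    simp only [Pi.mul_apply, Pi.div_apply, Function.comp_apply, id_eq, Set.indicator_of_mem hmem, Pi.one_apply,
      Pi.zero_apply, mul_one, ENNReal.ofReal_eq_zero] at hu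
    exact absurd hu (not_le.2 (by positivity : (0:ℝ) < 1/u))
  -- nonnegativity of h
  have hh0 : ∀ x, 0 ≤ h x := by
    intro x
    rw [hh x]
    refine integral_nonneg_of_ae ?_
    filter_upwards [hGpos] with u hu
    exact mul_nonneg (by positivity) (hf0 _)
  -- the main pointwise bound
  have hmain : ∀ᵐ x, x ∈ Ioi (0:ℝ) → (1 + x * h' x / h x) ^ 2 * h x ≤ (K x).toReal := by
    filter_upwards [hKae, hLae, hpush] with x hKx hLx hpx
    intro hx
    have hx0 : (0:ℝ) < x := hx
    set φ : ℝ → ℝ := fun u => (1/u) * F (x/u) with hφdef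
    set ψ : ℝ → ℝ := fun u => (1/u^2) * F' (x/u) with hψdef
    set g : ℝ → ℝ := fun u => 1 + (x/u) * F' (x/u) / F (x/u) with hgdef
    have hφm : Measurable φ :=
      (measurable_const.div measurable_id).mul (hF.comp (measurable_const.div measurable_id))
    have hψm : Measurable ψ :=
      (measurable_const.div (measurable_id.pow measurable_const)).mul
        (hF'.comp (measurable_const.div measurable_id))
    have hgm : Measurable g :=
      measurable_const.add (((measurable_const.div measurable_id).mul
        (hF'.comp (measurable_const.div measurable_id))).div
          (hF.comp (measurable_const.div measurable_id)))
    have hprop : ∀ᵐ u ∂G, 0 < u ∧ (f (x/u) = F (x/u) ∧ f' (x/u) = F' (x/u)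
        ∧ (F (x/u) = 0 → F' (x/u) = 0) ∧ 0 ≤ F (x/u)) := by
      filter_upwards [hGpos, hpx] with u h1 h2
      exact ⟨h1, hNprop _ h2⟩
    have hφ0 : 0 ≤ᵐ[G] φ := by
      filter_upwards [hprop] with u hu
      exact mul_nonneg (by have := hu.1; positivity) hu.2.2.2.2
    have hLx' : ∫⁻ u, ENNReal.ofReal (φ u) ∂G = L x := by
      refine lintegral_congr_ae ?_
      filter_upwards [hprop] with u hu
      rw [hφdef]
      exact ENNReal.ofReal_mul (by have := hu.1; positivity)
    have hφint : Integrable φ G := by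
      refine (lintegral_ofReal_ne_top_iff_integrable
        hφm.aestronglyMeasurable hφ0).1 ?_
      rw [hLx']; exact hLx.ne
    have hhx : h x = ∫ u, φ u ∂G := by
      rw [hh x]
      refine integral_congr_ae ?_
      filter_upwards [hprop] with u hu
      simp only [hφdef]
      rw [hu.2.1]
    have hxh : h x = (L x).toReal := by
      rw [hhx, integral_eq_lintegral_of_nonneg_ae hφ0 hφm.aestronglyMeasurable, hLx']
    have hKx' : ∫⁻ u, ENNReal.ofReal (g u ^ 2 * φ u) ∂G = K x := by
      refine lintegral_congr_ae ?_
      filter_upwards [hprop] with u hu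
      have he : g u ^ 2 * φ u = (1/u) * ρ (x/u) := by
        rw [hgdef, hφdef, hρdef]; ring
      rw [he, ENNReal.ofReal_mul (by have := hu.1; positivity)]
    have cs := cs_lemma G g φ hgm hφm hφ0
    rw [hKx', hLx'] at cs
    have hfin2 : ∫⁻ u, ENNReal.ofReal (|g u| * φ u) ∂G ≠ ⊤ := by
      intro htop
      rw [htop] at cs
      simp only [pow_two, ENNReal.top_mul_top, top_le_iff] at cs
      exact absurd cs (ENNReal.mul_lt_top hKx hLx).ne
    have habs : ∀ᵐ u ∂G, |g u * φ u| = |g u| * φ u := by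
      filter_upwards [hφ0] with u hu
      rw [abs_mul, abs_of_nonneg hu]
    have hagint : Integrable (fun u => |g u| * φ u) G := by
      refine (lintegral_ofReal_ne_top_iff_integrable
        (hgm.abs.mul hφm).aestronglyMeasurable ?_).1 hfin2
      filter_upwards [hφ0] with u hu
      exact mul_nonneg (abs_nonneg _) hu
    have hgφint : Integrable (fun u => g u * φ u) G := by
      refine hagint.mono' (hgm.mul hφm).aestronglyMeasurable ?_
      filter_upwards [habs] with u hu
      rw [Real.norm_eq_abs, hu]
    have hψae : ∀ᵐ u ∂G, g u * φ u = φ u + x * ψ u := by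
      filter_upwards [hprop] with u hu
      obtain ⟨hu1, _, _, himp, _⟩ := hu
      by_cases hd : F (x/u) = 0
      · simp only [hgdef, hφdef, hψdef]
        rw [hd, himp hd]; ring
      · simp only [hgdef, hφdef, hψdef]
        field_simp
    have hψint : Integrable ψ G := by
      have h1 : Integrable (fun u => x⁻¹ * ((g u * φ u) - φ u)) G :=
        (hgφint.sub hφint).const_mul _
      refine h1.congr ?_
      filter_upwards [hψae] with u hu
      rw [hu]
      field_simp
      ring
    have hh'x : h' x = ∫ u, ψ u ∂G := by
      rw [hh' x]
      refine integral_congr_ae ?_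
      filter_upwards [hprop] with u hu
      simp only [hψdef]
      rw [hu.2.2.1]
    have hsum : h x + x * h' x = ∫ u, g u * φ u ∂G := by
      rw [hhx, hh'x, ← integral_const_mul, ← integral_add hφint (hψint.const_mul x)]
      exact (integral_congr_ae hψae).symm
    have habs2 : |∫ u, g u * φ u ∂G| ≤ (∫⁻ u, ENNReal.ofReal (|g u| * φ u) ∂G).toReal := by
      calc |∫ u, g u * φ u ∂G| ≤ ∫ u, |g u| * |φ u| ∂G := by
            simpa [Real.norm_eq_abs] using norm_integral_le_integral_norm (fun u => g u * φ u) (μ := G)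
        _ = ∫ u, |g u| * φ u ∂G := integral_congr_ae
            (by filter_upwards [hφ0] with u hu; rw [abs_of_nonneg hu])
        _ = (∫⁻ u, ENNReal.ofReal (|g u| * φ u) ∂G).toReal := by
            rw [integral_eq_lintegral_of_nonneg_ae (f := fun u => |g u| * φ u)
              (by filter_upwards [hφ0] with u hu; exact mul_nonneg (abs_nonneg _) hu)
              (hgm.abs.mul hφm).aestronglyMeasurable]
    have hsq : (h x + x * h' x) ^ 2 ≤ (K x).toReal * h x := by
      rw [hsum]
      calc (∫ u, g u * φ u ∂G) ^ 2 = |∫ u, g u * φ u ∂G| ^ 2 := (sq_abs _).symm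
        _ ≤ ((∫⁻ u, ENNReal.ofReal (|g u| * φ u) ∂G).toReal) ^ 2 :=
            pow_le_pow_left₀ (abs_nonneg _) habs2 2
        _ = ((∫⁻ u, ENNReal.ofReal (|g u| * φ u) ∂G) ^ 2).toReal := by
            rw [ENNReal.toReal_pow]
        _ ≤ ((K x) * (L x)).toReal :=
            ENNReal.toReal_mono (ENNReal.mul_lt_top hKx hLx).ne cs
        _ = (K x).toReal * h x := by rw [ENNReal.toReal_mul, hxh]
    by_cases h0 : h x = 0
    · rw [h0]
      simp [ENNReal.toReal_nonneg]
    · have hpos : 0 < h x := lt_of_le_of_ne (hh0 x) (Ne.symm h0)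
      have heq : (1 + x * h' x / h x) ^ 2 * h x = (h x + x * h' x) ^ 2 / h x := by
        field_simp
      rw [heq, div_le_iff₀ hpos]
      exact hsq
  -- conclusion
  rw [hRHS]
  by_cases hqi : IntegrableOn (fun x => (1 + x * h' x / h x) ^ 2 * h x) (Ioi 0)
  · rw [integral_eq_lintegral_of_nonneg_ae
      (Filter.Eventually.of_forall fun x => mul_nonneg (sq_nonneg _) (hh0 x))
      hqi.aestronglyMeasurable]
    refine ENNReal.toReal_mono hRne ?_
    calc ∫⁻ x in Ioi (0:ℝ), ENNReal.ofReal ((1 + x * h' x / h x) ^ 2 * h x) ∂volume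
        ≤ ∫⁻ x in Ioi (0:ℝ), K x ∂volume := by
          refine lintegral_mono_ae ?_
          rw [ae_restrict_iff' measurableSet_Ioi]
          filter_upwards [hmain, hKae] with x h1 h2
          intro hxmem
          rw [← ENNReal.ofReal_toReal h2.ne]
          exact ENNReal.ofReal_le_ofReal (h1 hxmem)
      _ ≤ ∫⁻ x, K x ∂volume := lintegral_mono' Measure.restrict_le_self le_rfl
      _ = Rtop := hKtone
  · rw [integral_undef hqi]
    exact ENNReal.toReal_nonneg
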